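/- Let K be an H-graded field, I a finite group of graded automorphisms of K acting trivially on K₁, F = K^I, and V = ρ(F^×) ⊆ ρ(K^×) the set of grading indices r such that I acts trivially on K_r. Then the pairing ξ: I × (ρ(K^×)/V) → K₁^× sending (σ, r mod V) to σ(x)/x for any nonzero x ∈ K_r is well-defined, biadditive, nondegenerate in each variable, and consequently ρ(K^×)/V is finite of order equal to #I, so [K:F] = #I. -/

import Mathlib

open scoped DirectSum

/-- An `H`-graded field: a nonzero commutative ring with an internal grading by the
commutative group `H` in which every nonzero homogeneous element is invertible
(with homogeneous inverse). -/
structure GradedField (H : Type*) [CommGroup H] [DecidableEq H] (K : Type*) [CommRing K] where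
  comp : H → AddSubgroup K
  one_mem : (1 : K) ∈ comp 1
  mul_mem : ∀ {g h : H} {x y : K}, x ∈ comp g → y ∈ comp h → x * y ∈ comp (g * h)
  isInternal : DirectSum.IsInternal fun h : H => comp h
  zero_ne_one : (0 : K) ≠ 1
  inv_mem : ∀ {h : H} {x : K}, x ∈ comp h → x ≠ 0 → ∃ y ∈ comp h⁻¹, x * y = 1

namespace GradedField

variable {H : Type*} [CommGroup H] [DecidableEq H] {K : Type*} [CommRing K] (F : GradedField H K)

/-- A homogeneous element. -/
def Homogeneous (x : K) : Prop := ∃ h, x ∈ F.comp h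

/-- A subring is graded if each of its elements is a sum of homogeneous elements of the
subring. -/
def IsGradedSubring (R : Subring K) : Prop :=
  ∀ x ∈ R, x ∈ AddSubgroup.closure {y : K | y ∈ R ∧ F.Homogeneous y}

/-- A graded subfield: a graded subring closed under inverses of nonzero homogeneous
elements. -/
structure IsGradedSubfield (L : Subring K) : Prop where
  graded : F.IsGradedSubring L
  inv_mem : ∀ x ∈ L, F.Homogeneous x → x ≠ 0 → Ring.inverse x ∈ L

/-- A graded valuation ring of the graded subfield `L`: a graded subring `R ⊆ L` such that
every nonzero homogeneous element of `L` lies in `R` or has its inverse in `R`. -/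
def IsGradedValRing (L R : Subring K) : Prop :=
  R ≤ L ∧ F.IsGradedSubring R ∧
    ∀ x ∈ L, F.Homogeneous x → x ≠ 0 → (x ∈ R ∨ Ring.inverse x ∈ R)

/-- The identity component `K₁`, as a subring. -/
def oneComponent : Subring K where
  carrier := F.comp 1
  one_mem' := F.one_mem
  mul_mem' := fun ha hb => by simpa using F.mul_mem ha hb
  add_mem' := fun ha hb => (F.comp 1).add_mem ha hb
  zero_mem' := (F.comp 1).zero_mem
  neg_mem' := fun ha => (F.comp 1).neg_mem ha

theorem mem_oneComponent {x : K} : x ∈ F.oneComponent ↔ x ∈ F.comp 1 := Iff.rfl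

/-- The value group `ρ(L^×) ⊆ H` of a graded subfield `L`. -/
def valueGroup (L : Subring K)
    (hL : ∀ x ∈ L, F.Homogeneous x → x ≠ 0 → Ring.inverse x ∈ L) : Subgroup H where
  carrier := {h | ∃ x ∈ F.comp h, x ≠ 0 ∧ x ∈ L}
  one_mem' := ⟨1, F.one_mem, Ne.symm F.zero_ne_one, L.one_mem⟩
  mul_mem' := by
    rintro g h ⟨x, hx, hx0, hxL⟩ ⟨y, hy, hy0, hyL⟩
    obtain ⟨x', hx', hxx'⟩ := F.inv_mem hx hx0
    obtain ⟨y', hy', hyy'⟩ := F.inv_mem hy hy0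
    refine ⟨x * y, F.mul_mem hx hy, ?_, L.mul_mem hxL hyL⟩
    intro h0
    have h1 : x * y * (x' * y') = 1 := by rw [mul_mul_mul_comm, hxx', hyy', one_mul]
    rw [h0, zero_mul] at h1
    exact F.zero_ne_one h1
  inv_mem' := by
    rintro g ⟨x, hx, hx0, hxL⟩
    obtain ⟨y, hy, hxy⟩ := F.inv_mem hx hx0
    have hu : IsUnit x := IsUnit.of_mul_eq_one y hxy
    have hyx : Ring.inverse x = y := by
      calc Ring.inverse x = Ring.inverse x * (x * y) := by rw [hxy, mul_one]
        _ = Ring.inverse x * x * y := by ring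
        _ = y := by rw [Ring.inverse_mul_cancel x hu, one_mul]
    refine ⟨y, hy, ?_, ?_⟩
    · intro h0; rw [h0, mul_zero] at hxy; exact F.zero_ne_one hxy
    · rw [← hyx]; exact hL x hxL ⟨g, hx⟩ hx0

/-- The value group `ρ(K^×)` of the whole graded field. -/
def fullValueGroup : Subgroup H :=
  F.valueGroup ⊤ (fun _ _ _ _ => Subring.mem_top _)

/-- `K₁` as a module over `L₁ = K₁ ∩ L`. -/
def oneSubmodule (L : Subring K) : Submodule ↥(F.oneComponent ⊓ L) K where
  carrier := F.comp 1
  add_mem' := fun ha hb => (F.comp 1).add_mem ha hb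
  zero_mem' := (F.comp 1).zero_mem
  smul_mem' := fun c x hx => by
    have hc : (c : K) ∈ F.comp 1 := ((Subring.mem_inf).mp c.2).1
    have := F.mul_mem hc hx
    simpa [Subring.smul_def] using this

/-- A graded automorphism: a ring automorphism preserving each graded component. -/
def IsGradedAut (σ : RingAut K) : Prop := ∀ (h : H) (x : K), x ∈ F.comp h → σ x ∈ F.comp h

end GradedField

/-- The fixed subring `K^G` of a group of ring automorphisms. -/
def fixedSubring {K : Type*} [CommRing K] (G : Subgroup (RingAut K)) : Subring K where
  carrier := {x | ∀ σ ∈ G, σ x = x}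
  one_mem' := fun σ _ => map_one σ
  mul_mem' := fun ha hb σ hσ => by rw [map_mul, ha σ hσ, hb σ hσ]
  add_mem' := fun ha hb σ hσ => by rw [map_add, ha σ hσ, hb σ hσ]
  zero_mem' := fun σ _ => map_zero σ
  neg_mem' := fun ha σ hσ => by rw [map_neg, ha σ hσ]

theorem mem_fixedSubring {K : Type*} [CommRing K] {G : Subgroup (RingAut K)} {x : K} :
    x ∈ fixedSubring G ↔ ∀ σ ∈ G, σ x = x := Iff.rfl


namespace GradedField

variable {H : Type*} [CommGroup H] [DecidableEq H] {K : Type*} [CommRing K]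
variable (F : GradedField H K)

/-- Decomposition of an element into its homogeneous components. -/
noncomputable def decompose (x : K) : ⨁ h : H, ↥(F.comp h) :=
  (Equiv.ofBijective _ F.isInternal).symm x

/-- The degree-`h` homogeneous component of `x`. -/
noncomputable def component (h : H) (x : K) : K := (F.decompose x h : K)

/-- The inertia subgroup of `G`: graded automorphisms in `G` acting trivially on `K₁`. -/
def inertia (G : Subgroup (RingAut K)) : Subgroup (RingAut K) where
  carrier := {σ | σ ∈ G ∧ ∀ x ∈ F.comp 1, σ x = x}
  one_mem' := ⟨G.one_mem, fun _ _ => rfl⟩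
  mul_mem' := fun {a b} ha hb => ⟨G.mul_mem ha.1 hb.1, fun x hx => by
    show a (b x) = x
    rw [hb.2 x hx, ha.2 x hx]⟩
  inv_mem' := fun {a} ha => ⟨G.inv_mem ha.1, fun x hx => by
    conv_lhs => rw [← ha.2 x hx]
    exact a.symm_apply_apply x⟩

theorem mem_inertia {G : Subgroup (RingAut K)} {σ : RingAut K} :
    σ ∈ F.inertia G ↔ σ ∈ G ∧ ∀ x ∈ F.comp 1, σ x = x := Iff.rfl

end GradedField

/-- A subring `S` containing a subring `L`, viewed as an `L`-submodule of the ambient ring. -/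
def Subring.toSubmoduleOver {K : Type*} [CommRing K] (L S : Subring K) (hLS : L ≤ S) :
    Submodule ↥L K where
  carrier := S
  add_mem' := fun ha hb => S.add_mem ha hb
  zero_mem' := S.zero_mem
  smul_mem' := fun c x hx => S.mul_mem (hLS c.2) hx

section ZR

variable {H : Type*} [CommGroup H] [DecidableEq H] {K : Type*} [CommRing K]

/-- The Zariski–Riemann space of graded valuation rings of `K` containing `k₀`. -/
def GradedField.ZR (F : GradedField H K) (k₀ : Subring K) : Type _ :=
  {O : Subring K // F.IsGradedValRing ⊤ O ∧ k₀ ≤ O}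

/-- The set of homogeneous units (nonzero homogeneous elements) of `K`. -/
def GradedField.HomogUnits (F : GradedField H K) : Type _ :=
  {x : K // x ≠ 0 ∧ F.Homogeneous x}

open Classical in
/-- The embedding of the Zariski–Riemann space into `{0,1}^{K^×}` via characteristic
functions. -/
noncomputable def GradedField.chi (F : GradedField H K) (k₀ : Subring K) (O : F.ZR k₀) :
    F.HomogUnits → Bool :=
  fun x => decide (x.1 ∈ O.1)

/-- Basic open sets `P{F}∖{G}` of the constructible topology, for finite sets `F`, `G` of
homogeneous units. -/
def GradedField.constructibleBasis (F : GradedField H K) (k₀ : Subring K) :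
    Set (Set (F.ZR k₀)) :=
  {s | ∃ Fs Gs : Finset K, (∀ a ∈ Fs, a ≠ 0 ∧ F.Homogeneous a) ∧
    (∀ b ∈ Gs, b ≠ 0 ∧ F.Homogeneous b) ∧
    s = {O : F.ZR k₀ | (∀ a ∈ Fs, a ∈ O.1) ∧ ∀ b ∈ Gs, b ∉ O.1}}

/-- The constructible topology on the Zariski–Riemann space. -/
def GradedField.constructibleTop (F : GradedField H K) (k₀ : Subring K) :
    TopologicalSpace (F.ZR k₀) :=
  TopologicalSpace.generateFrom (F.constructibleBasis k₀)


section AuxCounting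

theorem card_monoidHom_le_aux (G : Type*) [CommGroup G] [Finite G] (R : Type*) [CommRing R]
    [IsDomain R] : Nat.card (G →* Rˣ) ≤ Nat.card G := by
  classical
  obtain ⟨ι, hfin, n, ⟨h₁, h₂⟩⟩ := CommGroup.equiv_prod_multiplicative_zmod_of_finite G
  let e := h₂.some
  haveI : Fintype ι := Fintype.ofFinite ι
  haveI : ∀ i, NeZero (n i) := fun i => NeZero.of_gt (h₁ i)
  have e1 : (G →* Rˣ) ≃ ((∀ i, Multiplicative (ZMod (n i))) →* Rˣ) :=
    (MulEquiv.monoidHomCongrLeft e).toEquiv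
  have e2 : ((∀ i, Multiplicative (ZMod (n i))) →* Rˣ) ≃ ∀ i, (Multiplicative (ZMod (n i)) →* Rˣ) :=
    (Pi.monoidHomMulEquiv _ _).toEquiv
  rw [Nat.card_congr (e1.trans e2), Nat.card_pi]
  have hcm : ∀ i, Nat.card (Multiplicative (ZMod (n i))) = n i := fun i => by
    rw [Nat.card_eq_fintype_card, Fintype.card_multiplicative, ZMod.card]
  have : Nat.card G = ∏ i, n i := by
    rw [Nat.card_congr e.toEquiv, Nat.card_pi]
    exact Finset.prod_congr rfl fun i _ => hcm i
  rw [this]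
  refine Finset.prod_le_prod (fun i _ => Nat.zero_le _) (fun i _ => ?_)
  have E := (IsCyclic.monoidHom_mulEquiv_rootsOfUnity (Multiplicative (ZMod (n i))) Rˣ).some
  rw [Nat.card_congr
    (E.trans (rootsOfUnityUnitsMulEquiv R (Nat.card (Multiplicative (ZMod (n i)))))).toEquiv, hcm i]
  exact card_rootsOfUnity (k := n i) (R := R)

theorem finite_monoidHom_units (G : Type*) [Group G] [Finite G] (R : Type*) [CommRing R]
    [IsDomain R] : Finite (G →* Rˣ) := by
  haveI : NeZero (Nat.card G) := ⟨Nat.card_pos.ne'⟩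
  refine Finite.of_injective
    (fun (f : G →* Rˣ) (g : G) => (⟨f g, ?_⟩ : rootsOfUnity (Nat.card G) R)) ?_
  · rw [mem_rootsOfUnity, ← map_pow, pow_card_eq_one', map_one]
  · intro f g hfg
    ext x
    simpa [Subtype.ext_iff, Units.ext_iff] using congrFun hfg x

end AuxCounting

namespace GradedField

variable {H : Type*} [CommGroup H] [DecidableEq H] {K : Type*} [CommRing K] (F : GradedField H K)

lemma nontrivialK (F' : GradedField H K) : Nontrivial K := ⟨⟨0, 1, F'.zero_ne_one⟩⟩

lemma isUnit_of_mem {h : H} {x : K} (hx : x ∈ F.comp h) (h0 : x ≠ 0) : IsUnit x := by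
  obtain ⟨y, -, hxy⟩ := F.inv_mem hx h0
  exact IsUnit.of_mul_eq_one y hxy

lemma mul_ne_zero' {g h : H} {x y : K} (hx : x ∈ F.comp g) (hy : y ∈ F.comp h)
    (hx0 : x ≠ 0) (hy0 : y ≠ 0) : x * y ≠ 0 := by
  haveI := F.nontrivialK
  exact ((F.isUnit_of_mem hx hx0).mul (F.isUnit_of_mem hy hy0)).ne_zero

lemma mem_fullValueGroup_iff {r : H} :
    r ∈ F.fullValueGroup ↔ ∃ x ∈ F.comp r, x ≠ 0 := by
  constructor
  · rintro ⟨x, hx, h0, -⟩; exact ⟨x, hx, h0⟩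
  · rintro ⟨x, hx, h0⟩; exact ⟨x, hx, h0, trivial⟩

lemma coe_decompose (x : K) :
    (DirectSum.coeAddMonoidHom fun h => F.comp h) (F.decompose x) = x :=
  (Equiv.ofBijective _ F.isInternal).apply_symm_apply x

lemma component_mem (h : H) (x : K) : F.component h x ∈ F.comp h := (F.decompose x h).2

lemma exists_sum_component' (x : K) :
    ∃ S : Finset H, (x = ∑ h ∈ S, F.component h x) ∧ ∀ h ∉ S, F.component h x = 0 := by
  classical
  refine ⟨(F.decompose x).support, ?_, ?_⟩
  · conv_lhs => rw [← F.coe_decompose x]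
    conv_lhs => rw [← DirectSum.sum_support_of (F.decompose x)]
    rw [map_sum]
    exact Finset.sum_congr rfl fun h _ => DirectSum.coeAddMonoidHom_of _ _ _
  · intro h hh
    have := DFinsupp.notMem_support_iff.mp hh
    simp [component, this]

lemma sum_eq_zero (S : Finset H) (y : H → K) (hy : ∀ h ∈ S, y h ∈ F.comp h)
    (h0 : ∑ h ∈ S, y h = 0) : ∀ h ∈ S, y h = 0 := by
  classical
  set d : ⨁ h, ↥(F.comp h) :=
    ∑ h ∈ S.attach, DirectSum.of (fun h => ↥(F.comp h)) h.1 ⟨y h.1, hy h.1 h.2⟩ with hd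
  have hcoe : (DirectSum.coeAddMonoidHom fun h => F.comp h) d = 0 := by
    rw [hd, map_sum]
    simpa [DirectSum.coeAddMonoidHom_of] using (Finset.sum_attach S y).trans h0
  have hd0 : d = 0 := F.isInternal.injective (by rw [hcoe, map_zero])
  intro h₀ hh₀
  have happ : d h₀ = ⟨y h₀, hy h₀ hh₀⟩ := by
    rw [hd, DFinsupp.finset_sum_apply]
    rw [Finset.sum_eq_single_of_mem (⟨h₀, hh₀⟩ : {x // x ∈ S}) (Finset.mem_attach S _)]
    · exact DirectSum.of_eq_same _ _
    · intro b _ hb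
      exact DirectSum.of_eq_of_ne _ _ _ (fun hc => hb (Subtype.ext hc.symm))
  have hz : (⟨y h₀, hy h₀ hh₀⟩ : ↥(F.comp h₀)) = 0 := by rw [← happ, hd0]; rfl
  exact congrArg Subtype.val hz

end GradedField

namespace GradedField

variable {H : Type*} [CommGroup H] [DecidableEq H] {K : Type*} [CommRing K] (F : GradedField H K)

lemma sum_eq_zero' {ι : Type*} (S : Finset ι) (d : ι → H) (hd : Set.InjOn d S)
    (y : ι → K) (hy : ∀ i ∈ S, y i ∈ F.comp (d i)) (h0 : ∑ i ∈ S, y i = 0) :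
    ∀ i ∈ S, y i = 0 := by
  classical
  have key := F.sum_eq_zero (S.image d) (fun h => ∑ i ∈ S.filter (fun j => d j = h), y i)
    (fun h _ => AddSubgroup.sum_mem _ fun i hi =>
      (Finset.mem_filter.mp hi).2 ▸ hy i (Finset.mem_filter.mp hi).1)
    (by rw [Finset.sum_fiberwise_of_maps_to (fun i hi => Finset.mem_image_of_mem d hi) y]
        exact h0)
  intro i hi
  have hfilter : S.filter (fun j => d j = d i) = {i} := by
    ext j
    simp only [Finset.mem_filter, Finset.mem_singleton]
    constructor
    · rintro ⟨hj, hdj⟩; exact hd hj hi hdj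
    · rintro rfl; exact ⟨hi, rfl⟩
  have h2 := key (d i) (Finset.mem_image_of_mem d hi)
  simp only [hfilter, Finset.sum_singleton] at h2
  exact h2

lemma scalar_exists {σ : RingAut K} (hσGr : ∀ (h : H) (x : K), x ∈ F.comp h → σ x ∈ F.comp h)
    (hσ1 : ∀ x ∈ F.comp 1, σ x = x) {r : H} {x : K} (hx : x ∈ F.comp r) (h0 : x ≠ 0) :
    ∃ ξ : K, ξ ∈ F.comp 1 ∧ ξ ≠ 0 ∧ ∀ y ∈ F.comp r, σ y = ξ * y := by
  obtain ⟨x', hx', hxx'⟩ := F.inv_mem hx h0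
  have hx'0 : x' ≠ 0 := fun h => F.zero_ne_one (by rw [h, mul_zero] at hxx'; exact hxx')
  have hσx : σ x ∈ F.comp r := hσGr r x hx
  have hσx0 : σ x ≠ 0 := fun h => h0 (σ.injective (by rw [h, map_zero]))
  refine ⟨σ x * x', by simpa using F.mul_mem hσx hx', F.mul_ne_zero' hσx hx' hσx0 hx'0, ?_⟩
  intro y hy
  have hy1 : y * x' ∈ F.comp 1 := by simpa using F.mul_mem hy hx'
  have hyd : y = (y * x') * x := by rw [mul_assoc, mul_comm x' x, hxx', mul_one]
  calc σ y = σ ((y * x') * x) := by rw [← hyd]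
    _ = σ (y * x') * σ x := map_mul σ _ _
    _ = (y * x') * σ x := by rw [hσ1 _ hy1]
    _ = σ x * x' * y := by ring

lemma scalar_unique {r : H} {x : K} (hx : x ∈ F.comp r) (h0 : x ≠ 0) {ξ ξ' : K}
    (h1 : ξ * x = ξ' * x) : ξ = ξ' :=
  (F.isUnit_of_mem hx h0).mul_right_cancel h1

lemma fix_all {σ : RingAut K} (hσGr : ∀ (h : H) (x : K), x ∈ F.comp h → σ x ∈ F.comp h)
    (hσ1 : ∀ x ∈ F.comp 1, σ x = x) {r : H} {x : K} (hx : x ∈ F.comp r) (h0 : x ≠ 0)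
    (hfix : σ x = x) : ∀ y ∈ F.comp r, σ y = y := by
  obtain ⟨ξ, -, -, hs⟩ := F.scalar_exists hσGr hσ1 hx h0
  have h1 : ξ = 1 := F.scalar_unique hx h0 (by rw [← hs x hx, hfix, one_mul])
  intro y hy
  rw [hs y hy, h1, one_mul]

lemma aut_ext {σ τ : RingAut K} (h : ∀ (r : H), ∀ x ∈ F.comp r, σ x = τ x) : σ = τ := by
  ext x
  obtain ⟨S, hS, -⟩ := F.exists_sum_component' x
  rw [hS, map_sum, map_sum]
  exact Finset.sum_congr rfl fun g _ => h g _ (F.component_mem g x)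

lemma component_fixed {σ : RingAut K} (hσGr : ∀ (h : H) (x : K), x ∈ F.comp h → σ x ∈ F.comp h)
    {x : K} (hfix : σ x = x) : ∀ h : H, σ (F.component h x) = F.component h x := by
  obtain ⟨S, hS, hS0⟩ := F.exists_sum_component' x
  have key := F.sum_eq_zero S (fun h => σ (F.component h x) - F.component h x)
    (fun h _ => (F.comp h).sub_mem (hσGr h _ (F.component_mem h x)) (F.component_mem h x))
    (by
      rw [Finset.sum_sub_distrib, ← map_sum, ← hS, hfix, sub_self])
  intro h
  by_cases hh : h ∈ S
  · simpa [sub_eq_zero] using key h hh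
  · rw [hS0 h hh, map_zero]

/-- The subgroup `V` of indices on whose components `I` acts trivially. -/
def fixedDegrees (I : Subgroup (RingAut K))
    (hTriv : ∀ σ ∈ I, ∀ x ∈ F.comp 1, σ x = x) : Subgroup H where
  carrier := {r | r ∈ F.fullValueGroup ∧ ∀ σ ∈ I, ∀ x ∈ F.comp r, σ x = x}
  one_mem' := ⟨F.fullValueGroup.one_mem, fun σ hσ => hTriv σ hσ⟩
  mul_mem' := by
    rintro r r' ⟨hr, hfr⟩ ⟨hr', hfr'⟩
    refine ⟨F.fullValueGroup.mul_mem hr hr', fun σ hσ x hx => ?_⟩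
    obtain ⟨u, hu, hu0⟩ := F.mem_fullValueGroup_iff.mp hr
    obtain ⟨v, hv, hv0⟩ := F.mem_fullValueGroup_iff.mp hr'
    have huv : u * v ∈ F.comp (r * r') := F.mul_mem hu hv
    have huv0 : u * v ≠ 0 := F.mul_ne_zero' hu hv hu0 hv0
    obtain ⟨w, hw, hw1⟩ := F.inv_mem huv huv0
    have hx1 : x * w ∈ F.comp 1 := by
      have := F.mul_mem hx hw; rwa [mul_inv_cancel] at this
    have hxd : x = (x * w) * (u * v) := by
      rw [mul_assoc, mul_comm w (u * v), hw1, mul_one]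
    calc σ x = σ (x * w) * (σ u * σ v) := by rw [← map_mul, ← map_mul, ← hxd]
      _ = (x * w) * (u * v) := by
          rw [hTriv σ hσ _ hx1, hfr σ hσ u hu, hfr' σ hσ v hv]
      _ = x := hxd.symm
  inv_mem' := by
    rintro r ⟨hr, hfr⟩
    refine ⟨F.fullValueGroup.inv_mem hr, fun σ hσ x hx => ?_⟩
    obtain ⟨u, hu, hu0⟩ := F.mem_fullValueGroup_iff.mp hr
    obtain ⟨u', hu', huu'⟩ := F.inv_mem hu hu0
    have hσu' : σ u' = u' := by
      have h1 : u * σ u' = 1 := by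
        rw [← hfr σ hσ u hu, ← map_mul, huu', map_one]
      calc σ u' = (u * u') * σ u' := by rw [huu', one_mul]
        _ = u' * (u * σ u') := by ring
        _ = u' := by rw [h1, mul_one]
    have hx1 : x * u ∈ F.comp 1 := by
      have := F.mul_mem hx hu; rwa [inv_mul_cancel] at this
    have hxd : x = (x * u) * u' := by rw [mul_assoc, huu', mul_one]
    calc σ x = σ (x * u) * σ u' := by rw [← map_mul, ← hxd]
      _ = (x * u) * u' := by rw [hTriv σ hσ _ hx1, hσu']
      _ = x := hxd.symm

/-- `K₁` is a field. -/
@[reducible] noncomputable def oneField : Field ↥F.oneComponent := by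
  haveI := F.nontrivialK
  refine IsField.toField ⟨⟨0, 1, fun h => F.zero_ne_one (congrArg Subtype.val h)⟩,
    mul_comm, ?_⟩
  rintro ⟨a, ha⟩ h0
  have ha0 : a ≠ 0 := fun h => h0 (Subtype.ext h)
  obtain ⟨b, hb, hab⟩ := F.inv_mem ha ha0
  rw [inv_one] at hb
  exact ⟨⟨b, hb⟩, Subtype.ext hab⟩

end GradedField

universe u v

/-- Let `I` be a finite group of graded automorphisms of an `H`-graded field `K` acting
trivially on `K₁`, `F' = K^I`, and `V = ρ(F'^×)` the subgroup of grading indices `r` with `I`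
acting trivially on `K_r`.  Then the pairing `ξ : I × (ρ(K^×)/V) → K₁^×`,
`(σ, r mod V) ↦ σ(x)/x` for nonzero `x ∈ K_r`, is well defined, biadditive, and
nondegenerate in each variable; consequently `ρ(K^×)/V` is finite of order `#I` and
`[K:F'] = #I`. -/
theorem GradedField.inertia_pairing {H : Type u} [CommGroup H] [DecidableEq H] {K : Type v}
    [CommRing K] (F : GradedField H K) (I : Subgroup (RingAut K)) [Finite I]
    (hGr : ∀ σ ∈ I, F.IsGradedAut σ) (hTriv : ∀ σ ∈ I, ∀ x ∈ F.comp 1, σ x = x) :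
    ∃ V : Subgroup H,
      (V : Set H) =
        {r | r ∈ F.fullValueGroup ∧ ∀ σ ∈ I, ∀ x ∈ F.comp r, σ x = x} ∧
      -- the pairing is defined: each `σ ∈ I` scales `K_r` by some nonzero `ξ ∈ K₁`
      (∀ σ ∈ I, ∀ r ∈ F.fullValueGroup,
        ∃ ξ ∈ F.oneComponent, ξ ≠ 0 ∧ ∀ x ∈ F.comp r, σ x = ξ * x) ∧
      -- well defined on `ρ(K^×)/V`: the scaling factor depends only on the coset of `r`
      (∀ σ ∈ I, ∀ r ∈ F.fullValueGroup, ∀ r' ∈ F.fullValueGroup, r / r' ∈ V →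
        ∀ ξ ξ' : K, (∀ x ∈ F.comp r, σ x = ξ * x) → (∀ x ∈ F.comp r', σ x = ξ' * x) →
          ξ = ξ') ∧
      -- biadditive in `σ`
      (∀ σ ∈ I, ∀ τ ∈ I, ∀ r ∈ F.fullValueGroup, ∀ ξ ξ' : K,
        (∀ x ∈ F.comp r, σ x = ξ * x) → (∀ x ∈ F.comp r, τ x = ξ' * x) →
          ∀ x ∈ F.comp r, (σ * τ : RingAut K) x = ξ * ξ' * x) ∧
      -- biadditive in `r`
      (∀ σ ∈ I, ∀ r ∈ F.fullValueGroup, ∀ r' ∈ F.fullValueGroup, ∀ ξ ξ' : K,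
        (∀ x ∈ F.comp r, σ x = ξ * x) → (∀ x ∈ F.comp r', σ x = ξ' * x) →
          ∀ x ∈ F.comp (r * r'), σ x = ξ * ξ' * x) ∧
      -- nondegenerate in `σ`
      (∀ σ ∈ I, σ ≠ 1 → ∃ r ∈ F.fullValueGroup, ∃ x ∈ F.comp r, σ x ≠ x) ∧
      -- nondegenerate in `r`
      (∀ r ∈ F.fullValueGroup, r ∉ V → ∃ σ ∈ I, ∃ x ∈ F.comp r, σ x ≠ x) ∧
      -- consequently: `#(ρ(K^×)/V) = #I` ...
      Nat.card (↥F.fullValueGroup ⧸ V.subgroupOf F.fullValueGroup) = Nat.card I ∧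
      -- ... and `[K:F'] = #I`
      Module.rank ↥(fixedSubring I) K = Nat.card I := by
  classical
  haveI := F.nontrivialK
  set V : Subgroup H := F.fixedDegrees I hTriv with hVdef
  -- clause 2: existence of scaling factors
  have hpair : ∀ σ ∈ I, ∀ r ∈ F.fullValueGroup,
      ∃ ξ ∈ F.oneComponent, ξ ≠ 0 ∧ ∀ x ∈ F.comp r, σ x = ξ * x := by
    intro σ hσ r hr
    obtain ⟨x, hx, h0⟩ := F.mem_fullValueGroup_iff.mp hr
    obtain ⟨ξ, h1, h2, h3⟩ := F.scalar_exists (hGr σ hσ) (hTriv σ hσ) hx h0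
    exact ⟨ξ, h1, h2, h3⟩
  -- clause 3: well-definedness
  have hwd : ∀ σ ∈ I, ∀ r ∈ F.fullValueGroup, ∀ r' ∈ F.fullValueGroup, r / r' ∈ V →
      ∀ ξ ξ' : K, (∀ x ∈ F.comp r, σ x = ξ * x) → (∀ x ∈ F.comp r', σ x = ξ' * x) →
      ξ = ξ' := by
    intro σ hσ r hr r' hr' hrr' ξ ξ' h1 h2
    obtain ⟨w, hw, hw0⟩ := F.mem_fullValueGroup_iff.mp hrr'.1
    obtain ⟨x', hx', hx'0⟩ := F.mem_fullValueGroup_iff.mp hr'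
    have hre : r / r' * r' = r := by rw [div_eq_mul_inv, mul_assoc, inv_mul_cancel, mul_one]
    have hwx' : w * x' ∈ F.comp r := by
      have := F.mul_mem hw hx'; rwa [hre] at this
    have hwx'0 : w * x' ≠ 0 := F.mul_ne_zero' hw hx' hw0 hx'0
    refine F.scalar_unique hwx' hwx'0 ?_
    rw [← h1 _ hwx', map_mul, hrr'.2 σ hσ w hw, h2 x' hx']
    ring
  -- clause 4: biadditive in σ
  have hbσ : ∀ σ ∈ I, ∀ τ ∈ I, ∀ r ∈ F.fullValueGroup, ∀ ξ ξ' : K,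
      (∀ x ∈ F.comp r, σ x = ξ * x) → (∀ x ∈ F.comp r, τ x = ξ' * x) →
      ∀ x ∈ F.comp r, (σ * τ : RingAut K) x = ξ * ξ' * x := by
    intro σ hσ τ hτ r hr ξ ξ' h1 h2 x hx
    obtain ⟨z, hz, hz0⟩ := F.mem_fullValueGroup_iff.mp hr
    obtain ⟨ξ₀, hm0, hn0, h30⟩ := hpair τ hτ r hr
    have hξ' : ξ' = ξ₀ := F.scalar_unique hz hz0 (by rw [← h2 z hz, h30 z hz])
    show σ (τ x) = ξ * ξ' * x
    rw [h2 x hx, hξ', map_mul, hTriv σ hσ ξ₀ hm0, h1 x hx]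
    ring
  -- clause 5: biadditive in r
  have hbr : ∀ σ ∈ I, ∀ r ∈ F.fullValueGroup, ∀ r' ∈ F.fullValueGroup, ∀ ξ ξ' : K,
      (∀ x ∈ F.comp r, σ x = ξ * x) → (∀ x ∈ F.comp r', σ x = ξ' * x) →
      ∀ x ∈ F.comp (r * r'), σ x = ξ * ξ' * x := by
    intro σ hσ r hr r' hr' ξ ξ' h1 h2 x hx
    obtain ⟨u, hu, hu0⟩ := F.mem_fullValueGroup_iff.mp hr
    obtain ⟨v, hv, hv0⟩ := F.mem_fullValueGroup_iff.mp hr'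
    obtain ⟨w, hw, hw1⟩ := F.inv_mem (F.mul_mem hu hv) (F.mul_ne_zero' hu hv hu0 hv0)
    have hx1 : x * w ∈ F.comp 1 := by
      have := F.mul_mem hx hw; rwa [mul_inv_cancel] at this
    have hxd : x = (x * w) * (u * v) := by
      rw [mul_assoc, mul_comm w (u * v), hw1, mul_one]
    calc σ x = σ (x * w) * (σ u * σ v) := by rw [← map_mul, ← map_mul, ← hxd]
      _ = (x * w) * ((ξ * u) * (ξ' * v)) := by
          rw [hTriv σ hσ _ hx1, h1 u hu, h2 v hv]
      _ = ξ * ξ' * ((x * w) * (u * v)) := by ring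
      _ = ξ * ξ' * x := by rw [← hxd]
  -- clause 6: nondegenerate in σ
  have hndσ : ∀ σ ∈ I, σ ≠ 1 → ∃ r ∈ F.fullValueGroup, ∃ x ∈ F.comp r, σ x ≠ x := by
    intro σ hσ hne
    by_contra hcon
    push_neg at hcon
    refine hne (F.aut_ext fun r x hx => ?_)
    show σ x = (1 : RingAut K) x
    by_cases h0 : x = 0
    · rw [h0, map_zero, map_zero]
    · have hr : r ∈ F.fullValueGroup := F.mem_fullValueGroup_iff.mpr ⟨x, hx, h0⟩
      exact hcon r hr x hx
  -- clause 7: nondegenerate in r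
  have hndr : ∀ r ∈ F.fullValueGroup, r ∉ V → ∃ σ ∈ I, ∃ x ∈ F.comp r, σ x ≠ x := by
    intro r hr hrV
    by_contra hcon
    push_neg at hcon
    exact hrV ⟨hr, fun σ hσ x hx => hcon σ hσ x hx⟩
  letI : Field ↥F.oneComponent := F.oneField
  -- the canonical pairing, valued in units of the field K₁
  have hpair' : ∀ (σ : ↥I) (r : ↥F.fullValueGroup),
      ∃ ξ : (↥F.oneComponent)ˣ,
        ∀ x ∈ F.comp (r : H), (σ : RingAut K) x = ((ξ : ↥F.oneComponent) : K) * x := by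
    intro σ r
    obtain ⟨ξ, hm, hn, hs⟩ := hpair σ σ.2 r r.2
    exact ⟨Units.mk0 (⟨ξ, hm⟩ : ↥F.oneComponent) (fun h => hn (congrArg Subtype.val h)), hs⟩
  choose pair hpairs using hpair'
  have punique : ∀ (σ : ↥I) (r : ↥F.fullValueGroup) (c : K),
      (∀ x ∈ F.comp (r : H), (σ : RingAut K) x = c * x) →
      c = ((pair σ r : ↥F.oneComponent) : K) := by
    intro σ r c hc
    obtain ⟨z, hz, hz0⟩ := F.mem_fullValueGroup_iff.mp r.2
    exact F.scalar_unique hz hz0 (by rw [← hc z hz, hpairs σ r z hz])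
  have pmul₁ : ∀ (σ τ : ↥I) (r : ↥F.fullValueGroup),
      pair (σ * τ) r = pair σ r * pair τ r := by
    intro σ τ r
    have h := hbσ σ σ.2 τ τ.2 r r.2 _ _ (hpairs σ r) (hpairs τ r)
    have h2 := punique (σ * τ) r _ (fun x hx => h x hx)
    exact Units.ext (Subtype.ext (by
      rw [← h2]; rfl))
  have pmul₂ : ∀ (σ : ↥I) (r r' : ↥F.fullValueGroup),
      pair σ (r * r') = pair σ r * pair σ r' := by
    intro σ r r'
    have h := hbr σ σ.2 r r.2 r' r'.2 _ _ (hpairs σ r) (hpairs σ r')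
    have h2 := punique σ (r * r') _ (fun x hx => h x hx)
    exact Units.ext (Subtype.ext (by rw [← h2]; rfl))
  have pV : ∀ (σ : ↥I) (r : ↥F.fullValueGroup), (r : H) ∈ V → pair σ r = 1 := by
    intro σ r hrV
    have h2 := punique σ r 1 (fun x hx => by rw [hrV.2 σ σ.2 x hx, one_mul])
    exact Units.ext (Subtype.ext (by rw [← h2]; rfl))
  have pfix : ∀ (σ : ↥I) (r : ↥F.fullValueGroup), pair σ r = 1 →
      ∀ x ∈ F.comp (r : H), (σ : RingAut K) x = x := by
    intro σ r h x hx
    rw [hpairs σ r x hx, h]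
    exact one_mul x
  -- `I` is commutative
  have hcommI : ∀ σ τ : ↥I, σ * τ = τ * σ := by
    intro σ τ
    refine Subtype.ext (F.aut_ext fun r x hx => ?_)
    by_cases h0 : x = 0
    · rw [h0, map_zero, map_zero]
    · have hr : r ∈ F.fullValueGroup := F.mem_fullValueGroup_iff.mpr ⟨x, hx, h0⟩
      have h1 := hbσ σ σ.2 τ τ.2 r hr _ _ (hpairs σ ⟨r, hr⟩) (hpairs τ ⟨r, hr⟩) x hx
      have h2 := hbσ τ τ.2 σ σ.2 r hr _ _ (hpairs τ ⟨r, hr⟩) (hpairs σ ⟨r, hr⟩) x hx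
      show ((σ : RingAut K) * (τ : RingAut K)) x = ((τ : RingAut K) * (σ : RingAut K)) x
      rw [h1, h2]; ring
  letI commI : CommGroup ↥I := { (inferInstance : Group ↥I) with mul_comm := hcommI }
  set V' := V.subgroupOf F.fullValueGroup with hV'
  let ψ : ↥F.fullValueGroup →* (↥I →* (↥F.oneComponent)ˣ) :=
    MonoidHom.mk' (fun r => MonoidHom.mk' (fun σ => pair σ r) (fun σ τ => pmul₁ σ τ r))
      (fun r r' => MonoidHom.ext fun σ => pmul₂ σ r r')
  have hψV : ∀ v ∈ V', ψ v = 1 := fun v hv =>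
    MonoidHom.ext fun σ => pV σ v (Subgroup.mem_subgroupOf.mp hv)
  let Ψ : (↥F.fullValueGroup ⧸ V') →* (↥I →* (↥F.oneComponent)ˣ) :=
    QuotientGroup.lift V' ψ hψV
  have hΨinj : Function.Injective Ψ := by
    rw [← MonoidHom.ker_eq_bot_iff, Subgroup.eq_bot_iff_forall]
    intro q hq
    induction q using QuotientGroup.induction_on with
    | H r =>
      have hψr : ψ r = 1 := hq
      have hrV : (r : H) ∈ V := by
        refine ⟨r.2, fun σ hσ x hx => ?_⟩
        exact pfix ⟨σ, hσ⟩ r (DFunLike.congr_fun hψr ⟨σ, hσ⟩) x hx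
      exact (QuotientGroup.eq_one_iff r).mpr (Subgroup.mem_subgroupOf.mpr hrV)
  haveI : Finite (↥I →* (↥F.oneComponent)ˣ) := finite_monoidHom_units ↥I ↥F.oneComponent
  haveI hQfin : Finite (↥F.fullValueGroup ⧸ V') := Finite.of_injective Ψ hΨinj
  let φfun : ↥I → ((↥F.fullValueGroup ⧸ V') →* (↥F.oneComponent)ˣ) := fun σ =>
    QuotientGroup.lift V'
      (MonoidHom.mk' (fun r => pair σ r) (fun r r' => pmul₂ σ r r'))
      (fun v hv => pV σ v (Subgroup.mem_subgroupOf.mp hv))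
  have hφinj : Function.Injective φfun := by
    intro σ τ h
    refine Subtype.ext (F.aut_ext fun r x hx => ?_)
    by_cases h0 : x = 0
    · rw [h0, map_zero, map_zero]
    · have hr : r ∈ F.fullValueGroup := F.mem_fullValueGroup_iff.mpr ⟨x, hx, h0⟩
      have hp : pair σ ⟨r, hr⟩ = pair τ ⟨r, hr⟩ :=
        congrArg (fun f => f (QuotientGroup.mk (⟨r, hr⟩ : ↥F.fullValueGroup))) h
      rw [hpairs σ ⟨r, hr⟩ x hx, hpairs τ ⟨r, hr⟩ x hx, hp]
  haveI : Finite ((↥F.fullValueGroup ⧸ V') →* (↥F.oneComponent)ˣ) :=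
    finite_monoidHom_units _ ↥F.oneComponent
  have hcard : Nat.card (↥F.fullValueGroup ⧸ V.subgroupOf F.fullValueGroup) = Nat.card I := by
    refine le_antisymm ?_ ?_
    · exact le_trans (Nat.card_le_card_of_injective Ψ hΨinj)
        (card_monoidHom_le_aux ↥I (↥F.oneComponent))
    · exact le_trans (Nat.card_le_card_of_injective φfun hφinj)
        (card_monoidHom_le_aux _ (↥F.oneComponent))
  have hrank : Module.rank ↥(fixedSubring I) K = Nat.card I := by
    haveI : Nontrivial ↥(fixedSubring I) :=
      ⟨0, 1, fun h => F.zero_ne_one (congrArg Subtype.val h)⟩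
    set Q := ↥F.fullValueGroup ⧸ V' with hQ
    have hrep : ∀ q : Q, (QuotientGroup.mk (Quotient.out q) : Q) = q :=
      fun q => QuotientGroup.out_eq' q
    have hxe : ∀ q : Q, ∃ x ∈ F.comp ((Quotient.out q : ↥F.fullValueGroup) : H), x ≠ 0 :=
      fun q => F.mem_fullValueGroup_iff.mp (Quotient.out q).2
    choose xq hxqm hxq0 using hxe
    have hdegV : ∀ (h : H) (hh : h ∈ F.fullValueGroup),
        h * (((Quotient.out (QuotientGroup.mk (⟨h, hh⟩ : ↥F.fullValueGroup) : Q)) :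
          ↥F.fullValueGroup) : H)⁻¹ ∈ V := by
      intro h hh
      set q : Q := QuotientGroup.mk (⟨h, hh⟩ : ↥F.fullValueGroup) with hq
      have hmk : (QuotientGroup.mk (⟨h, hh⟩ : ↥F.fullValueGroup) : Q) =
          QuotientGroup.mk (Quotient.out q) := by rw [hrep]
      have hv' : (⟨h, hh⟩ : ↥F.fullValueGroup)⁻¹ * Quotient.out q ∈ V' :=
        QuotientGroup.eq.mp hmk
      have hvV : h⁻¹ * ((Quotient.out q : ↥F.fullValueGroup) : H) ∈ V :=
        Subgroup.mem_subgroupOf.mp hv'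
      have hinv := V.inv_mem hvV
      rwa [mul_inv_rev, inv_inv, mul_comm] at hinv
    have hspan : ∀ z : K, z ∈ Submodule.span ↥(fixedSubring I) (Set.range xq) := by
      intro z
      obtain ⟨S, hS, -⟩ := F.exists_sum_component' z
      rw [hS]
      refine Submodule.sum_mem _ fun h hh => ?_
      by_cases h0 : F.component h z = 0
      · rw [h0]; exact Submodule.zero_mem _
      · have hr : h ∈ F.fullValueGroup :=
          F.mem_fullValueGroup_iff.mpr ⟨_, F.component_mem h z, h0⟩
        obtain ⟨y, hy, hxy⟩ := F.inv_mem
          (hxqm (QuotientGroup.mk (⟨h, hr⟩ : ↥F.fullValueGroup)))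
          (hxq0 (QuotientGroup.mk (⟨h, hr⟩ : ↥F.fullValueGroup)))
        set q : Q := QuotientGroup.mk (⟨h, hr⟩ : ↥F.fullValueGroup) with hq
        have hcmem : F.component h z * y ∈
            F.comp (h * (((Quotient.out q : ↥F.fullValueGroup)) : H)⁻¹) :=
          F.mul_mem (F.component_mem h z) hy
        have hcF : F.component h z * y ∈ fixedSubring I :=
          fun σ hσ => (hdegV h hr).2 σ hσ _ hcmem
        have hrepr : F.component h z = (F.component h z * y) * xq q := by
          rw [mul_assoc, mul_comm y (xq q), hxy, mul_one]
        rw [hrepr]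
        have hsm : (⟨_, hcF⟩ : ↥(fixedSubring I)) • xq q = (F.component h z * y) * xq q := rfl
        rw [← hsm]
        exact Submodule.smul_mem _ _ (Submodule.subset_span ⟨q, rfl⟩)
    have hli : LinearIndependent ↥(fixedSubring I) xq := by
      rw [linearIndependent_iff']
      intro s g hsum i hi
      have hgF : ∀ (q : Q) (h : H), F.component h ((g q : K)) ∈ fixedSubring I := by
        intro q h σ hσ
        exact F.component_fixed (hGr σ hσ) ((g q).2 σ hσ) h
      have hcomp0 : ∀ (q : Q) (h : H), F.component h ((g q : K)) ≠ 0 → h ∈ V := by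
        intro q h hne
        have hmem := F.component_mem h ((g q : K))
        have hfv : h ∈ F.fullValueGroup := F.mem_fullValueGroup_iff.mpr ⟨_, hmem, hne⟩
        exact ⟨hfv, fun σ hσ x hx =>
          F.fix_all (hGr σ hσ) (hTriv σ hσ) hmem hne (hgF q h σ hσ) x hx⟩
      choose Sq hSq1 _hSq2 using fun q : Q => F.exists_sum_component' ((g q : K))
      set Tq : Q → Finset H :=
        fun q => (Sq q).filter (fun h => F.component h ((g q : K)) ≠ 0) with hTq
      have hTsum : ∀ q : Q, ∑ h ∈ Tq q, F.component h ((g q : K)) = (g q : K) := by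
        intro q
        rw [hTq, Finset.sum_filter_ne_zero]
        exact (hSq1 q).symm
      set P : Finset (Q × H) := s.biUnion (fun q => (Tq q).image (fun h => (q, h))) with hP
      have hdisj : ∀ q ∈ s, ∀ q' ∈ s, q ≠ q' →
          Disjoint ((Tq q).image (fun h => (q, h))) ((Tq q').image (fun h => (q', h))) := by
        intro q _ q' _ hne
        simp only [Finset.disjoint_left, Finset.mem_image]
        rintro p ⟨h, -, rfl⟩ ⟨h', -, hEq⟩
        exact hne (congrArg Prod.fst hEq).symm
      have hsum0 : ∑ p ∈ P, F.component p.2 ((g p.1 : K)) * xq p.1 = 0 := by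
        rw [hP, Finset.sum_biUnion hdisj]
        have hin : ∀ q ∈ s,
            ∑ p ∈ (Tq q).image (fun h => (q, h)), F.component p.2 ((g p.1 : K)) * xq p.1
            = (g q : K) * xq q := by
          intro q _
          rw [Finset.sum_image (fun a _ b _ hab => congrArg Prod.snd hab)]
          simp only
          rw [← Finset.sum_mul, hTsum q]
        rw [Finset.sum_congr rfl hin]
        have hmul : ∀ q ∈ s, (g q : K) * xq q = g q • xq q := fun q _ => rfl
        rw [Finset.sum_congr rfl hmul]
        exact hsum
      have hinj : Set.InjOn
          (fun p : Q × H => p.2 * (((Quotient.out p.1 : ↥F.fullValueGroup)) : H)) ↑P := by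
        intro p hp p' hp' hEq
        simp only [hP, Finset.coe_biUnion, Set.mem_iUnion, Finset.mem_coe,
          Finset.mem_image] at hp hp'
        obtain ⟨q, hq, h, hh, rfl⟩ := hp
        obtain ⟨q', hq', h', hh', rfl⟩ := hp'
        simp only at hEq
        have hhV : h ∈ V := hcomp0 q h (Finset.mem_filter.mp hh).2
        have hh'V : h' ∈ V := hcomp0 q' h' (Finset.mem_filter.mp hh').2
        have hdd : ((Quotient.out q : ↥F.fullValueGroup) : H)⁻¹ *
            ((Quotient.out q' : ↥F.fullValueGroup) : H) = h'⁻¹ * h := by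
          have e : h' * ((Quotient.out q' : ↥F.fullValueGroup) : H) =
              h * ((Quotient.out q : ↥F.fullValueGroup) : H) := hEq.symm
          calc ((Quotient.out q : ↥F.fullValueGroup) : H)⁻¹ *
                ((Quotient.out q' : ↥F.fullValueGroup) : H)
              = ((Quotient.out q : ↥F.fullValueGroup) : H)⁻¹ *
                (h'⁻¹ * (h' * ((Quotient.out q' : ↥F.fullValueGroup) : H))) := by group
            _ = ((Quotient.out q : ↥F.fullValueGroup) : H)⁻¹ *
                (h'⁻¹ * (h * ((Quotient.out q : ↥F.fullValueGroup) : H))) := by rw [e]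
            _ = h'⁻¹ * h := by
                rw [mul_comm h ((Quotient.out q : ↥F.fullValueGroup) : H), mul_left_comm,
                  inv_mul_cancel_left]
        have hqq : q = q' := by
          have hVmem : (Quotient.out q)⁻¹ * Quotient.out q' ∈ V' := by
            apply Subgroup.mem_subgroupOf.mpr
            have : (((Quotient.out q)⁻¹ * Quotient.out q' : ↥F.fullValueGroup) : H) =
                ((Quotient.out q : ↥F.fullValueGroup) : H)⁻¹ *
                ((Quotient.out q' : ↥F.fullValueGroup) : H) := rfl
            rw [this, hdd]
            exact V.mul_mem (V.inv_mem hh'V) hhV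
          have hmk := QuotientGroup.eq.mpr hVmem
          rwa [hrep, hrep] at hmk
        subst hqq
        have hhh : h = h' := mul_right_cancel hEq
        rw [hhh]
      have hall := F.sum_eq_zero' P _ hinj _
        (fun p _ => F.mul_mem (F.component_mem p.2 _) (hxqm p.1)) hsum0
      have hTempty : ∀ h ∈ Tq i, False := by
        intro h hh
        have hp : (i, h) ∈ P := Finset.mem_biUnion.mpr ⟨i, hi, Finset.mem_image_of_mem _ hh⟩
        have hz := hall (i, h) hp
        obtain ⟨y, hy, hxy⟩ := F.inv_mem (hxqm i) (hxq0 i)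
        have hc0 : F.component h ((g i : K)) = 0 := by
          have : F.component h ((g i : K)) * (xq i * y) = 0 := by
            rw [← mul_assoc, hz, zero_mul]
          rwa [hxy, mul_one] at this
        exact (Finset.mem_filter.mp hh).2 hc0
      have hgi : (g i : K) = 0 := by
        rw [← hTsum i]
        refine Finset.sum_eq_zero fun h hh => absurd hh (fun c => hTempty h c)
      exact Subtype.ext hgi
    let b : Module.Basis Q ↥(fixedSubring I) K := Module.Basis.mk hli (fun z _ => hspan z)
    haveI : Finite Q := hQfin
    haveI : Fintype Q := Fintype.ofFinite Q
    rw [rank_eq_card_basis b]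
    exact congrArg Nat.cast (by rw [← Nat.card_eq_fintype_card, hcard])
  exact ⟨V, rfl, hpair, hwd, hbσ, hbr, hndσ, hndr, hcard, hrank⟩
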